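/- Let A, M ∈ ℝ^{n×n} and define inductively A_1 = A, M_1 = M, A_{i+1} = A A_i + M_i, M_{i+1} = M A_i for i ≥ 1. Let λ^{2n} + a_1 λ^{2n−1} + a_2 λ^{2n−2} + ⋯ + a_{2n} be the characteristic polynomial of the 2n×2n block matrix P = [[A, I_n],[M, 0]]. Then A_{2n+1} = −a_1 A_{2n} − a_2 A_{2n−1} − ⋯ − a_{2n} A_1. -/

import Mathlib

open Matrix Polynomial

/-- The sequences `A_{i+1}`, `M_{i+1}` of the paper for constant kernels: the value at
index `i : ℕ` corresponds to the subscript `i + 1`, so `amcSeq A M 0 = (A₁, M₁) = (A, M)`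
and `amcSeq A M (i+1) = (A A_{i+1} + M_{i+1}, M A_{i+1})`. -/
def amcSeq {n : ℕ} (A M : Matrix (Fin n) (Fin n) ℝ) :
    ℕ → Matrix (Fin n) (Fin n) ℝ × Matrix (Fin n) (Fin n) ℝ
  | 0 => (A, M)
  | i + 1 =>
    let p := amcSeq A M i
    (A * p.1 + p.2, M * p.1)

/-- `AmatC A M i = A_i`, with the convention `A₀ = Iₙ`. -/
def AmatC {n : ℕ} (A M : Matrix (Fin n) (Fin n) ℝ) : ℕ → Matrix (Fin n) (Fin n) ℝ
  | 0 => 1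
  | i + 1 => (amcSeq A M i).1

def DmatC {n : ℕ} (A M : Matrix (Fin n) (Fin n) ℝ) : ℕ → Matrix (Fin n) (Fin n) ℝ
  | 0 => 0
  | i + 1 => AmatC A M i

lemma amcSeq_snd {n : ℕ} (A M : Matrix (Fin n) (Fin n) ℝ) (i : ℕ) :
    (amcSeq A M i).2 = M * AmatC A M i := by
  cases i with
  | zero => simp [amcSeq, AmatC]
  | succ j => simp [amcSeq, AmatC]

lemma AmatC_succ_succ {n : ℕ} (A M : Matrix (Fin n) (Fin n) ℝ) (i : ℕ) :
    AmatC A M (i + 2) = A * AmatC A M (i + 1) + M * AmatC A M i := by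
  show (amcSeq A M (i+1)).1 = _
  rw [amcSeq]
  simp [AmatC, amcSeq_snd]

lemma pow_succ_eq {n : ℕ} (A M : Matrix (Fin n) (Fin n) ℝ) (i : ℕ) :
    (Matrix.fromBlocks A 1 M 0) ^ (i + 1) =
      Matrix.fromBlocks (AmatC A M (i + 1)) (AmatC A M i)
        (M * AmatC A M i) (M * DmatC A M i) := by
  induction i with
  | zero => simp [AmatC, amcSeq, DmatC]
  | succ j ih =>
    have e1 : A * AmatC A M (j+1) + M * AmatC A M j = AmatC A M (j+2) :=
      (AmatC_succ_succ A M j).symm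
    have e2 : A * AmatC A M j + M * DmatC A M j = AmatC A M (j+1) := by
      cases j with
      | zero => simp [AmatC, amcSeq, DmatC]
      | succ l => rw [DmatC, ← AmatC_succ_succ]
    rw [pow_succ', ih, Matrix.fromBlocks_multiply]
    simp only [Matrix.one_mul, Matrix.zero_mul, Matrix.mul_zero, add_zero, Matrix.mul_one]
    rw [e1, e2, DmatC]

lemma toBlocks₁₁_pow {n : ℕ} (A M : Matrix (Fin n) (Fin n) ℝ) (i : ℕ) :
    ((Matrix.fromBlocks A (1 : Matrix (Fin n) (Fin n) ℝ) M 0) ^ (i + 1)).toBlocks₁₁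
      = AmatC A M (i + 1) := by
  rw [pow_succ_eq]; simp

/-- if `λ^{2n} + a₁λ^{2n-1} + ⋯ + a_{2n}` is the characteristic
polynomial of `P = [[A, Iₙ], [M, 0]]`, then
`A_{2n+1} = -a₁A_{2n} - a₂A_{2n-1} - ⋯ - a_{2n}A₁`. -/
theorem A_recursion_charpoly
    (n : ℕ) (A M : Matrix (Fin n) (Fin n) ℝ) (a : ℕ → ℝ)
    (hchar : (Matrix.fromBlocks A 1 M 0).charpoly =
      Polynomial.X ^ (2 * n) +
        ∑ k ∈ Finset.Icc 1 (2 * n), Polynomial.C (a k) * Polynomial.X ^ (2 * n - k)) :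
    AmatC A M (2 * n + 1) =
      ∑ k ∈ Finset.Icc 1 (2 * n), (-(a k)) • AmatC A M (2 * n + 1 - k) := by
  set P := Matrix.fromBlocks A (1 : Matrix (Fin n) (Fin n) ℝ) M 0 with hP
  have hCH := Matrix.aeval_self_charpoly P
  rw [hchar] at hCH
  simp only [map_add, map_sum, map_pow, aeval_X, aeval_C, _root_.map_mul,
    Algebra.algebraMap_eq_smul_one, smul_mul_assoc, one_mul] at hCH
  have h2 : P ^ (2 * n + 1) + ∑ k ∈ Finset.Icc 1 (2 * n), a k • P ^ (2 * n + 1 - k) = 0 := by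
    have h := congrArg (· * P) hCH
    simp only [add_mul, Finset.sum_mul, smul_mul_assoc, Matrix.zero_mul, zero_mul] at h
    rw [← pow_succ] at h
    rw [← h]
    congr 1
    apply Finset.sum_congr rfl
    intro k hk
    simp only [Finset.mem_Icc] at hk
    rw [← pow_succ]
    congr 2
    omega
  have h3 : P ^ (2 * n + 1) = ∑ k ∈ Finset.Icc 1 (2 * n), (-(a k)) • P ^ (2 * n + 1 - k) := by
    have := eq_neg_of_add_eq_zero_left h2
    rw [this, ← Finset.sum_neg_distrib]
    apply Finset.sum_congr rfl
    intro k _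
    rw [neg_smul]
  have h4 := congrArg Matrix.toBlocks₁₁ h3
  rw [toBlocks₁₁_pow] at h4
  rw [h4]
  have hsum : (∑ k ∈ Finset.Icc 1 (2 * n), (-(a k)) • P ^ (2 * n + 1 - k)).toBlocks₁₁
      = ∑ k ∈ Finset.Icc 1 (2 * n), (-(a k)) • (P ^ (2 * n + 1 - k)).toBlocks₁₁ := by
    ext i j
    simp [Matrix.toBlocks₁₁, Matrix.sum_apply]
  rw [hsum]
  apply Finset.sum_congr rfl
  intro k hk
  simp only [Finset.mem_Icc] at hk
  have hke : 2 * n + 1 - k = (2 * n - k) + 1 := by omega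
  rw [hke, hP, toBlocks₁₁_pow A M (2 * n - k)]
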